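/- (Corollary: large noise disparity.) Fix a positive integer k, and for ν > 0 define f_k(ν) := (1/V_{1,k})·(2πν)^{−k/2}·∫_{B_k} exp(−‖x‖²/(2ν)) dx, where B_k is the closed unit ball in ℝ^k and V_{1,k} = π^{k/2}/Γ(k/2+1) is its volume. Let (σ_{R,m}²)_{m≥1} and (σ_{P,m}²)_{m≥1} be sequences of positive reals with lim_{m→∞} σ_{R,m}² = c for some c > 0 and lim_{m→∞} σ_{P,m}²/σ_{R,m}² = ∞, and set ν_{R,m} := 2σ_{R,m}² and ν_{P,m} := σ_{R,m}² + σ_{P,m}². Then lim_{m→∞} f_k(ν_{R,m})/f_k(ν_{P,m}) = ∞, and consequently lim_{m→∞} f_k(ν_{R,m})/( f_k(ν_{R,m}) + f_k(ν_{P,m}) ) = 1. -/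

import Mathlib

open Real MeasureTheory Filter

/-- `f_k(ν) := (1/V_{1,k})·(2πν)^{−k/2}·∫_{B_k} exp(−‖x‖²/(2ν)) dx`, the density at `0` of
`X + Z` for `X` uniform on the unit ball `B_k ⊆ ℝ^k` and `Z ~ N(0, ν I_k)` independent.
Here `V_{1,k} = π^{k/2}/Γ(k/2+1)` is the volume of the unit ball. -/
noncomputable def densAtZero (k : ℕ) (ν : ℝ) : ℝ :=
  (1 / (Real.pi ^ ((k : ℝ) / 2) / Real.Gamma ((k : ℝ) / 2 + 1))) *
    (2 * Real.pi * ν) ^ (-(k : ℝ) / 2) *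
    ∫ x in Metric.closedBall (0 : EuclideanSpace ℝ (Fin k)) 1,
      Real.exp (-‖x‖ ^ 2 / (2 * ν))

noncomputable def ballVol (k : ℕ) : ℝ :=
  (volume (Metric.closedBall (0 : EuclideanSpace ℝ (Fin k)) 1)).toReal

lemma ballVol_pos (k : ℕ) : 0 < ballVol k := by
  have h := Metric.measure_closedBall_pos (volume : Measure (EuclideanSpace ℝ (Fin k))) 0 one_pos
  exact ENNReal.toReal_pos h.ne' measure_closedBall_lt_top.ne

lemma intOn (k : ℕ) (ν : ℝ) :
    IntegrableOn (fun x : EuclideanSpace ℝ (Fin k) => Real.exp (-‖x‖ ^ 2 / (2 * ν)))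
      (Metric.closedBall 0 1) := by
  apply ContinuousOn.integrableOn_compact (isCompact_closedBall _ _)
  exact Continuous.continuousOn (by fun_prop)

lemma I_le (k : ℕ) (ν : ℝ) (hν : 0 < ν) :
    (∫ x in Metric.closedBall (0 : EuclideanSpace ℝ (Fin k)) 1,
      Real.exp (-‖x‖ ^ 2 / (2 * ν))) ≤ ballVol k := by
  have h : (∫ x in Metric.closedBall (0 : EuclideanSpace ℝ (Fin k)) 1,
      Real.exp (-‖x‖ ^ 2 / (2 * ν))) ≤
      ∫ _x in Metric.closedBall (0 : EuclideanSpace ℝ (Fin k)) 1, (1:ℝ) := by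
    apply setIntegral_mono_on (intOn k ν)
      (integrableOn_const measure_closedBall_lt_top.ne) measurableSet_closedBall
    intro x _
    simp only [Real.exp_le_one_iff]
    exact div_nonpos_of_nonpos_of_nonneg (neg_nonpos.2 (sq_nonneg _)) (by positivity)
  simpa [ballVol, Measure.real] using h

lemma I_ge (k : ℕ) (ν : ℝ) (hν : 0 < ν) :
    Real.exp (-(1 / (2 * ν))) * ballVol k ≤
      ∫ x in Metric.closedBall (0 : EuclideanSpace ℝ (Fin k)) 1,
        Real.exp (-‖x‖ ^ 2 / (2 * ν)) := by
  have h : (∫ _x in Metric.closedBall (0 : EuclideanSpace ℝ (Fin k)) 1,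
        Real.exp (-(1 / (2 * ν)))) ≤
      ∫ x in Metric.closedBall (0 : EuclideanSpace ℝ (Fin k)) 1,
        Real.exp (-‖x‖ ^ 2 / (2 * ν)) := by
    apply setIntegral_mono_on
      (integrableOn_const measure_closedBall_lt_top.ne) (intOn k ν)
      measurableSet_closedBall
    intro x hx
    have hx1 : ‖x‖ ≤ 1 := by simpa using hx
    have hx2 : ‖x‖ ^ 2 ≤ 1 := by nlinarith [norm_nonneg x]
    apply Real.exp_le_exp.2
    rw [neg_div, neg_le_neg_iff]
    gcongr
  calc Real.exp (-(1 / (2 * ν))) * ballVol k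
      = ∫ _x in Metric.closedBall (0 : EuclideanSpace ℝ (Fin k)) 1,
          Real.exp (-(1 / (2 * ν))) := by
        rw [setIntegral_const, smul_eq_mul, mul_comm]; rfl
    _ ≤ _ := h

lemma densAtZero_pos (k : ℕ) (ν : ℝ) (hν : 0 < ν) : 0 < densAtZero k ν := by
  have hC : 0 < 1 / (Real.pi ^ ((k : ℝ) / 2) / Real.Gamma ((k : ℝ) / 2 + 1)) := by
    have hG : 0 < Real.Gamma ((k : ℝ) / 2 + 1) :=
      Real.Gamma_pos_of_pos (by positivity)
    have hP : (0:ℝ) < Real.pi ^ ((k : ℝ) / 2) := Real.rpow_pos_of_pos Real.pi_pos _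
    positivity
  have ha : (0:ℝ) < (2 * Real.pi * ν) ^ (-(k : ℝ) / 2) :=
    Real.rpow_pos_of_pos (by positivity) _
  have hI : 0 < ∫ x in Metric.closedBall (0 : EuclideanSpace ℝ (Fin k)) 1,
      Real.exp (-‖x‖ ^ 2 / (2 * ν)) :=
    lt_of_lt_of_le (mul_pos (Real.exp_pos _) (ballVol_pos k)) (I_ge k ν hν)
  unfold densAtZero
  positivity

lemma ratio_ge (k : ℕ) (νR νP : ℝ) (hR : 0 < νR) (hP : 0 < νP) :
    Real.exp (-(1 / (2 * νR))) * (νP / νR) ^ ((k : ℝ) / 2) ≤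
      densAtZero k νR / densAtZero k νP := by
  set e : ℝ := (k : ℝ) / 2 with he
  set IR := ∫ x in Metric.closedBall (0 : EuclideanSpace ℝ (Fin k)) 1,
      Real.exp (-‖x‖ ^ 2 / (2 * νR)) with hIR
  set IP := ∫ x in Metric.closedBall (0 : EuclideanSpace ℝ (Fin k)) 1,
      Real.exp (-‖x‖ ^ 2 / (2 * νP)) with hIP
  have hIRge := I_ge k νR hR
  have hIPle := I_le k νP hP
  have hIPge := I_ge k νP hP
  have hIPpos : 0 < IP := lt_of_lt_of_le (mul_pos (Real.exp_pos _) (ballVol_pos k)) hIPge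
  have hIRpos : 0 < IR :=
    lt_of_lt_of_le (mul_pos (Real.exp_pos _) (ballVol_pos k)) hIRge
  have hGpos : 0 < Real.Gamma ((k : ℝ) / 2 + 1) := Real.Gamma_pos_of_pos (by positivity)
  have hPpos : (0:ℝ) < Real.pi ^ ((k : ℝ) / 2) := Real.rpow_pos_of_pos Real.pi_pos _
  have haR : (0:ℝ) < (2 * Real.pi * νR) ^ e := Real.rpow_pos_of_pos (by positivity) _
  have haP : (0:ℝ) < (2 * Real.pi * νP) ^ e := Real.rpow_pos_of_pos (by positivity) _
  have hrw : densAtZero k νR / densAtZero k νP =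
      ((2 * Real.pi * νP) ^ e / (2 * Real.pi * νR) ^ e) * (IR / IP) := by
    unfold densAtZero
    rw [show (-(k : ℝ) / 2) = -e by rw [he]; ring,
      Real.rpow_neg (by positivity : (0:ℝ) ≤ 2 * Real.pi * νR),
      Real.rpow_neg (by positivity : (0:ℝ) ≤ 2 * Real.pi * νP)]
    rw [← hIR, ← hIP]
    field_simp
  have hq : (νP / νR) ^ e = (2 * Real.pi * νP) ^ e / (2 * Real.pi * νR) ^ e := by
    rw [← Real.div_rpow (by positivity) (by positivity)]
    congr 1
    exact (mul_div_mul_left _ _ (by positivity : (2:ℝ) * Real.pi ≠ 0)).symm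
  rw [hrw, ← hq]
  have hexp_le : Real.exp (-(1 / (2 * νR))) ≤ IR / IP := by
    rw [le_div_iff₀ hIPpos]
    calc Real.exp (-(1 / (2 * νR))) * IP
        ≤ Real.exp (-(1 / (2 * νR))) * ballVol k :=
          mul_le_mul_of_nonneg_left hIPle (Real.exp_pos _).le
      _ ≤ IR := hIRge
  have hqnn : (0:ℝ) ≤ (νP / νR) ^ e := Real.rpow_nonneg (by positivity) _
  calc Real.exp (-(1 / (2 * νR))) * (νP / νR) ^ e
      = (νP / νR) ^ e * Real.exp (-(1 / (2 * νR))) := mul_comm _ _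
    _ ≤ (νP / νR) ^ e * (IR / IP) := mul_le_mul_of_nonneg_left hexp_le hqnn

/-- Large noise disparity: if `σ_{R,m}² → c > 0` and `σ_{P,m}²/σ_{R,m}² → ∞`, then with
`ν_{R,m} = 2σ_{R,m}²` and `ν_{P,m} = σ_{R,m}² + σ_{P,m}²`, the ratio
`f_k(ν_{R,m})/f_k(ν_{P,m}) → ∞` and `f_k(ν_{R,m})/(f_k(ν_{R,m}) + f_k(ν_{P,m})) → 1`
as `m → ∞`, for every fixed positive dimension `k`. -/
theorem densAtZero_ratio_tendsto_atTop_of_noise_disparity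
    (k : ℕ) (hk : 0 < k)
    (σR2 σP2 : ℕ → ℝ) (hRpos : ∀ m, 0 < σR2 m) (hPpos : ∀ m, 0 < σP2 m)
    (c : ℝ) (hc : 0 < c) (hRlim : Tendsto σR2 atTop (nhds c))
    (hratio : Tendsto (fun m => σP2 m / σR2 m) atTop atTop) :
    Tendsto (fun m : ℕ =>
        densAtZero k (2 * σR2 m) / densAtZero k (σR2 m + σP2 m)) atTop atTop ∧
    Tendsto (fun m : ℕ =>
        densAtZero k (2 * σR2 m) /
          (densAtZero k (2 * σR2 m) + densAtZero k (σR2 m + σP2 m)))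
      atTop (nhds 1) := by
  set fR : ℕ → ℝ := fun m => densAtZero k (2 * σR2 m) with hfR
  set fP : ℕ → ℝ := fun m => densAtZero k (σR2 m + σP2 m) with hfP
  have hνR : ∀ m, (0:ℝ) < 2 * σR2 m := fun m => by have := hRpos m; linarith
  have hνP : ∀ m, (0:ℝ) < σR2 m + σP2 m := fun m => by
    have := hRpos m; have := hPpos m; linarith
  have hfRpos : ∀ m, 0 < fR m := fun m => densAtZero_pos k _ (hνR m)
  have hfPpos : ∀ m, 0 < fP m := fun m => densAtZero_pos k _ (hνP m)
  -- the lower bound sequence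
  have hr : Tendsto (fun m => (σR2 m + σP2 m) / (2 * σR2 m)) atTop atTop := by
    have heq : ∀ m, (σR2 m + σP2 m) / (2 * σR2 m) = (1 + σP2 m / σR2 m) / 2 := by
      intro m
      rw [show 1 + σP2 m / σR2 m = (σR2 m + σP2 m) / σR2 m by
        rw [add_div, div_self (hRpos m).ne'], div_div, mul_comm]
    simp only [heq]
    exact (tendsto_atTop_add_const_left atTop 1 hratio).atTop_div_const two_pos
  have hepos : (0:ℝ) < (k : ℝ) / 2 := by positivity
  have hpow : Tendsto (fun m => ((σR2 m + σP2 m) / (2 * σR2 m)) ^ ((k:ℝ)/2)) atTop atTop :=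
    (tendsto_rpow_atTop hepos).comp hr
  have hg : Tendsto
      (fun m => Real.exp (-(1 / (2 * c))) *
        ((σR2 m + σP2 m) / (2 * σR2 m)) ^ ((k:ℝ)/2)) atTop atTop :=
    hpow.const_mul_atTop (Real.exp_pos _)
  have hev : ∀ᶠ m in atTop,
      Real.exp (-(1 / (2 * c))) * ((σR2 m + σP2 m) / (2 * σR2 m)) ^ ((k:ℝ)/2)
        ≤ fR m / fP m := by
    filter_upwards [hRlim.eventually (eventually_ge_nhds (half_lt_self hc))] with m hm
    have hcle : c ≤ 2 * σR2 m := by linarith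
    have hexp : Real.exp (-(1 / (2 * c))) ≤ Real.exp (-(1 / (2 * (2 * σR2 m)))) := by
      apply Real.exp_le_exp.2
      apply neg_le_neg
      apply one_div_le_one_div_of_le (by positivity)
      linarith
    calc Real.exp (-(1 / (2 * c))) * ((σR2 m + σP2 m) / (2 * σR2 m)) ^ ((k:ℝ)/2)
        ≤ Real.exp (-(1 / (2 * (2 * σR2 m)))) *
            ((σR2 m + σP2 m) / (2 * σR2 m)) ^ ((k:ℝ)/2) :=
          mul_le_mul_of_nonneg_right hexp (Real.rpow_nonneg (div_nonneg (hνP m).le (hνR m).le) _)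
      _ ≤ fR m / fP m := ratio_ge k _ _ (hνR m) (hνP m)
  have h1 : Tendsto (fun m => fR m / fP m) atTop atTop :=
    tendsto_atTop_mono' atTop hev hg
  refine ⟨h1, ?_⟩
  have h2 : Tendsto (fun m => fP m / fR m) atTop (nhds 0) := by
    have := tendsto_inv_atTop_zero.comp h1
    simpa [Function.comp_def, inv_div] using this
  have heq : ∀ m, fR m / (fR m + fP m) = 1 / (1 + fP m / fR m) := by
    intro m
    have h0 : fR m ≠ 0 := (hfRpos m).ne'
    have hs : fR m + fP m ≠ 0 := (add_pos (hfRpos m) (hfPpos m)).ne'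
    field_simp
  have h3 : Tendsto (fun m => 1 + fP m / fR m) atTop (nhds 1) := by
    simpa using tendsto_const_nhds.add h2
  have hlim : Tendsto (fun m => 1 / (1 + fP m / fR m)) atTop (nhds 1) := by
    simpa [one_div] using h3.inv₀ one_ne_zero
  show Tendsto (fun m => fR m / (fR m + fP m)) atTop (nhds 1)
  simpa only [heq] using hlim
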